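/- A quadratic t + ξω + ξ²Ω is nonnegative for all ξ ∈ [w₁, w₂] if and only if there exist φ₁, φ₂ ≥ 0 such that the quadratic t + ξω + ξ²Ω − φ₁(w₂ − ξ) − φ₂(ξ − w₁) is nonnegative for all ξ ∈ ℝ (an S-lemma / nonnegativity certificate on an interval), assuming Ω ≥ 0. -/

import Mathlib

/-- S-lemma / nonnegativity certificate for a quadratic on an interval:
`t + ξω + ξ²Ω ≥ 0` on `[w₁, w₂]` (with `Ω ≥ 0`) iff there are multipliers
`φ₁, φ₂ ≥ 0` making `t + ξω + ξ²Ω − φ₁(w₂ − ξ) − φ₂(ξ − w₁)` nonnegative on all of `ℝ`.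
`Om` denotes `Ω`. -/
theorem quadratic_interval_nonneg_iff_certificate (t ω Om w₁ w₂ : ℝ)
    (hOm : 0 ≤ Om) (hw : w₁ < w₂) :
    (∀ ξ ∈ Set.Icc w₁ w₂, 0 ≤ t + ξ * ω + ξ ^ 2 * Om) ↔
    ∃ φ₁ φ₂ : ℝ, 0 ≤ φ₁ ∧ 0 ≤ φ₂ ∧
      ∀ ξ : ℝ, 0 ≤ t + ξ * ω + ξ ^ 2 * Om - φ₁ * (w₂ - ξ) - φ₂ * (ξ - w₁) := by
  constructor
  · intro hq
    have h1 := hq w₁ ⟨le_refl _, hw.le⟩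
    have h2 := hq w₂ ⟨hw.le, le_refl _⟩
    rcases le_or_gt 0 (ω + 2 * Om * w₁) with hc1 | hc1
    · exact ⟨0, ω + 2 * Om * w₁, le_refl 0, hc1, fun ξ => by
        nlinarith [mul_nonneg hOm (sq_nonneg (ξ - w₁))]⟩
    · rcases le_or_gt (ω + 2 * Om * w₂) 0 with hc2 | hc2
      · exact ⟨-(ω + 2 * Om * w₂), 0, by linarith, le_refl 0, fun ξ => by
          nlinarith [mul_nonneg hOm (sq_nonneg (ξ - w₂))]⟩
      · have hOmpos : 0 < Om := by
          rcases hOm.lt_or_eq with h | h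
          · exact h
          · nlinarith
        have hmem : -ω / (2 * Om) ∈ Set.Icc w₁ w₂ := by
          constructor
          · rw [le_div_iff₀ (by positivity)]; nlinarith
          · rw [div_le_iff₀ (by positivity)]; nlinarith
        have hmin := hq _ hmem
        have key : 0 ≤ 4 * Om * t - ω ^ 2 := by
          have h2Om : (2 * Om) ≠ 0 := by positivity
          field_simp at hmin
          nlinarith [mul_pos hOmpos hOmpos]
        exact ⟨0, 0, le_refl 0, le_refl 0, fun ξ => by
          nlinarith [sq_nonneg (2 * Om * ξ + ω), hOmpos.le]⟩
  · rintro ⟨φ₁, φ₂, h1, h2, h⟩ ξ ⟨ha, hb⟩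
    nlinarith [h ξ, mul_nonneg h1 (sub_nonneg.mpr hb), mul_nonneg h2 (sub_nonneg.mpr ha)]
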